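/- arXiv:1705.08572 — 2 statements merged into one kernel-verified Lean document; each statement's English description precedes it below -/
import Mathlib

section
/- Corollary 1: Assume the weights Q_1, …, Q_K are pairwise distinct and let Ẽ = E ∩ [0, P_max], where E = {0, P_max} ∪ {η(g_j Q_j − g_i Q_i)/(g_i g_j (Q_i − Q_j)) : 1 ≤ i < j ≤ K} ∪ {Q_i/Z − η/g_i : 1 ≤ i ≤ K}. If p* ∈ D is a global maximizer of F over D, then for every k ∈ {1, …, K} the partial sum S_k(p*) = p*_1 + ⋯ + p*_k belongs to Ẽ. -/
open Finset

/-- Prefix sum `S_k(p) = p_1 + ⋯ + p_k` (0-based: sum of the first `k` coordinates). -/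
noncomputable def Sfun (K : ℕ) (p : Fin K → ℝ) (k : ℕ) : ℝ :=
  ∑ j : Fin K, if (j : ℕ) < k then p j else 0

/-- The NOMA objective `F`. -/
noncomputable def Fobj (K : ℕ) (g Q : Fin K → ℝ) (η Z : ℝ) (p : Fin K → ℝ) : ℝ :=
  (∑ k : Fin K, Q k * Real.log (1 + p k * g k / (Sfun K p (k : ℕ) * g k + η)))
    - Z * Sfun K p K

/-- The feasible set `D`. -/
def Dfeas (K : ℕ) (Pmax : ℝ) : Set (Fin K → ℝ) :=
  {p | (∀ k, 0 ≤ p k) ∧ Sfun K p K ≤ Pmax}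

/-- The finite candidate set `E`. -/
def Ecand (K : ℕ) (g Q : Fin K → ℝ) (η Z Pmax : ℝ) : Set ℝ :=
  ({0, Pmax} : Set ℝ)
    ∪ {x | ∃ i j : Fin K, i < j ∧
        x = η * (g j * Q j - g i * Q i) / (g i * g j * (Q i - Q j))}
    ∪ {x | ∃ i : Fin K, x = Q i / Z - η / g i}

lemma Sfun_zero (K : ℕ) (p : Fin K → ℝ) : Sfun K p 0 = 0 := by
  simp [Sfun]

lemma Sfun_succ (K : ℕ) (p : Fin K → ℝ) (m : ℕ) (hm : m < K) :
    Sfun K p (m + 1) = Sfun K p m + p ⟨m, hm⟩ := by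
  have key : ∀ j : Fin K, (if (j : ℕ) < m + 1 then p j else 0)
      = (if (j : ℕ) < m then p j else 0) + (if (j : ℕ) = m then p j else 0) := by
    intro j
    by_cases h : (j : ℕ) < m
    · rw [if_pos (by omega), if_pos h, if_neg (by omega), add_zero]
    · by_cases h' : (j : ℕ) = m
      · rw [if_pos (by omega), if_neg h, if_pos h', zero_add]
      · rw [if_neg (by omega), if_neg h, if_neg h', add_zero]
  unfold Sfun
  rw [Finset.sum_congr rfl (fun j _ => key j), Finset.sum_add_distrib]
  congr 1
  rw [Fintype.sum_eq_single (⟨m, hm⟩ : Fin K) (fun b hb => if_neg (fun hc => hb (Fin.ext hc)))]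
  simp

lemma Sfun_le (K : ℕ) (p : Fin K → ℝ) (hp : ∀ k, 0 ≤ p k) {a b : ℕ} (hab : a ≤ b) :
    Sfun K p a ≤ Sfun K p b := by
  apply Finset.sum_le_sum
  intro j _
  by_cases h1 : (j : ℕ) < a
  · rw [if_pos h1, if_pos (by omega)]
  · rw [if_neg h1]
    by_cases h2 : (j : ℕ) < b
    · rw [if_pos h2]; exact hp j
    · rw [if_neg h2]

lemma Sfun_stable (K : ℕ) (p : Fin K → ℝ) {m : ℕ} (hm : K ≤ m) :
    Sfun K p m = Sfun K p K := by
  unfold Sfun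
  refine Finset.sum_congr rfl fun j _ => ?_
  have := j.isLt
  rw [if_pos (by omega), if_pos (by omega)]

lemma Sfun_telescope (K : ℕ) (f : ℕ → ℝ) {m : ℕ} (hm : m ≤ K) :
    Sfun K (fun l : Fin K => f ((l : ℕ) + 1) - f (l : ℕ)) m = f m - f 0 := by
  induction m with
  | zero => simp [Sfun_zero]
  | succ n ih =>
    rw [Sfun_succ K _ n (by omega), ih (by omega)]
    ring

/-- **Corollary 1.** If `p*` is a global maximizer of `F` over `D`, then every partial sum
`S_k(p*)`, `1 ≤ k ≤ K`, lies in `Ẽ = E ∩ [0, P_max]`. -/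
theorem finite_point_structure_truncated
    (K : ℕ) (hK : 1 ≤ K) (g Q : Fin K → ℝ) (η Z Pmax : ℝ)
    (hg : ∀ i j : Fin K, i ≤ j → g j ≤ g i) (hgpos : ∀ i, 0 < g i)
    (hQpos : ∀ i, 0 < Q i) (hQdist : ∀ i j : Fin K, i ≠ j → Q i ≠ Q j)
    (hη : 0 < η) (hZ : 0 < Z) (hP : 0 < Pmax)
    (pstar : Fin K → ℝ) (hfeas : pstar ∈ Dfeas K Pmax)
    (hopt : ∀ q ∈ Dfeas K Pmax, Fobj K g Q η Z q ≤ Fobj K g Q η Z pstar) :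
    ∀ k : ℕ, 1 ≤ k → k ≤ K →
      Sfun K pstar k ∈ Ecand K g Q η Z Pmax ∩ Set.Icc (0 : ℝ) Pmax := by
  classical
  intro k0 hk1 hk2
  obtain ⟨hpnn, hsum⟩ := hfeas
  set s : ℕ → ℝ := fun m => Sfun K pstar m with hsdef
  have hs0 : s 0 = 0 := Sfun_zero K pstar
  have hsmono : ∀ {a b : ℕ}, a ≤ b → s a ≤ s b :=
    fun hab => Sfun_le K pstar hpnn hab
  have hsnn : ∀ m, 0 ≤ s m := fun m => hs0 ▸ hsmono (Nat.zero_le m)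
  have hsPm : ∀ m, s m ≤ Pmax := by
    intro m
    by_cases h : m ≤ K
    · exact (hsmono h).trans hsum
    · have : s m = s K := Sfun_stable K pstar (by omega)
      rw [this]; exact hsum
  set v : ℝ := s k0 with hvdef
  have hIcc : v ∈ Set.Icc (0 : ℝ) Pmax := ⟨hsnn k0, hsPm k0⟩
  refine ⟨?_, hIcc⟩
  have hveq : Sfun K pstar k0 = v := rfl
  by_cases hv0 : v = 0
  · exact Or.inl (Or.inl (by rw [hveq, hv0]; left; rfl))
  by_cases hvP : v = Pmax
  · exact Or.inl (Or.inl (by rw [hveq, hvP]; right; rfl))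
  have hv0' : 0 < v := lt_of_le_of_ne (hsnn k0) (Ne.symm hv0)
  have hvP' : v < Pmax := lt_of_le_of_ne (hsPm k0) hvP
  -- indices of the maximal constant run of s at value v
  have hex : ∃ m, s m = v := ⟨k0, rfl⟩
  set i : ℕ := Nat.find hex with hidef
  have hsi : s i = v := Nat.find_spec hex
  have hik : i ≤ k0 := Nat.find_min' hex rfl
  have hi1 : 1 ≤ i := by
    by_contra h
    have hi0 : i = 0 := by omega
    rw [hi0, hs0] at hsi
    exact hv0 hsi.symm
  set j : ℕ := Nat.findGreatest (fun m => s m = v) K with hjdef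
  have hjs : s j = v := Nat.findGreatest_spec (P := fun m => s m = v) hk2 rfl
  have hkj : k0 ≤ j := Nat.le_findGreatest (P := fun m => s m = v) hk2 rfl
  have hjK : j ≤ K := Nat.findGreatest_le K
  have hij : i ≤ j := hik.trans hkj
  have hiK : i - 1 < K := by omega
  have hlo : s (i - 1) < v := by
    refine lt_of_le_of_ne ?_ (Nat.find_min hex (show i - 1 < i by omega))
    calc s (i - 1) ≤ s i := hsmono (by omega)
    _ = v := hsi
  have hblock : ∀ m, i ≤ m → m ≤ j → s m = v := by
    intro m h1 h2
    refine le_antisymm ?_ ?_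
    · rw [← hjs]; exact hsmono h2
    · rw [← hsi]; exact hsmono h1
  have hjnext : j < K → v < s (j + 1) := by
    intro h
    refine lt_of_le_of_ne ?_ ?_
    · rw [← hjs]; exact hsmono (by omega)
    · exact fun hc => Nat.findGreatest_is_greatest (Nat.lt_succ_self j) (by omega) hc.symm
  set hi' : ℝ := if j = K then Pmax else s (j + 1) with hhidef
  have hvhi : v < hi' := by
    rw [hhidef]
    split_ifs with h
    · exact hvP'
    · exact hjnext (by omega)
  have hhiP : hi' ≤ Pmax := by
    rw [hhidef]; split_ifs with h
    · exact le_refl Pmax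
    · exact hsPm (j + 1)
  -- the perturbed prefix-sum profile and power allocation
  set sP : ℝ → ℕ → ℝ := fun t m => if i ≤ m ∧ m ≤ j then t else s m with hsPdef
  set q : ℝ → Fin K → ℝ := fun t l => sP t ((l : ℕ) + 1) - sP t (l : ℕ) with hqdef
  have hsPv : ∀ m, sP v m = s m := by
    intro m
    rw [hsPdef]
    dsimp only
    split_ifs with h
    · exact (hblock m h.1 h.2).symm
    · rfl
  have hsP0 : ∀ t, sP t 0 = 0 := by
    intro t
    rw [hsPdef]
    dsimp only
    rw [if_neg (by omega), hs0]
  have hsPnn : ∀ t, 0 ≤ t → ∀ m, 0 ≤ sP t m := by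
    intro t ht m
    rw [hsPdef]; dsimp only
    split_ifs
    · exact ht
    · exact hsnn m
  have hqv : q v = pstar := by
    funext l
    rw [hqdef]
    dsimp only
    rw [hsPv, hsPv]
    have := Sfun_succ K pstar (l : ℕ) l.isLt
    rw [hsdef]
    dsimp only
    rw [this]
    simp
  -- monotonicity of the perturbed profile for t in the interval
  have hsPstep : ∀ t, s (i-1) < t → t < hi' → ∀ m, m < K → sP t m ≤ sP t (m + 1) := by
    intro t ht1 ht2 m hm
    rw [hsPdef]; dsimp only
    by_cases h1 : i ≤ m ∧ m ≤ j
    · rw [if_pos h1]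
      by_cases h2 : i ≤ m + 1 ∧ m + 1 ≤ j
      · rw [if_pos h2]
      · rw [if_neg h2]
        have hmj : m = j := by omega
        have hjK' : j < K := by omega
        have : hi' = s (j + 1) := by rw [hhidef, if_neg (by omega)]
        rw [hmj]
        linarith [this ▸ ht2]
    · rw [if_neg h1]
      by_cases h2 : i ≤ m + 1 ∧ m + 1 ≤ j
      · rw [if_pos h2]
        have : m = i - 1 := by omega
        rw [this]
        exact ht1.le
      · rw [if_neg h2]
        exact hsmono (by omega)
  -- feasibility of the perturbed allocation
  have hqfeas : ∀ t, s (i-1) < t → t < hi' → q t ∈ Dfeas K Pmax := by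
    intro t ht1 ht2
    constructor
    · intro l
      rw [hqdef]; dsimp only
      have := hsPstep t ht1 ht2 (l : ℕ) l.isLt
      linarith
    · have htel : Sfun K (q t) K = sP t K - sP t 0 := by
        rw [hqdef]
        exact Sfun_telescope K (sP t) (le_refl K)
      rw [htel, hsP0, sub_zero, hsPdef]
      dsimp only
      split_ifs with h
      · have : j = K := by omega
        have : hi' = Pmax := by rw [hhidef, if_pos this]
        linarith [this ▸ ht2]
      · exact hsPm K
  -- value of the objective along the perturbation
  set hfun : ℝ → ℝ := fun t =>
    (∑ k : Fin K, Q k * (Real.log (sP t ((k : ℕ) + 1) * g k + η)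
        - Real.log (sP t (k : ℕ) * g k + η))) - Z * sP t K with hfdef
  have hpos : ∀ t, 0 ≤ t → ∀ m (k : Fin K), 0 < sP t m * g k + η := by
    intro t ht m k
    have := hsPnn t ht m
    have := (hgpos k)
    nlinarith
  have hFq : ∀ t, s (i-1) < t → t < hi' → Fobj K g Q η Z (q t) = hfun t := by
    intro t ht1 ht2
    have ht0 : 0 ≤ t := le_trans (hsnn (i-1)) ht1.le
    rw [Fobj, hfdef]
    dsimp only
    have htel : ∀ m : ℕ, m ≤ K → Sfun K (q t) m = sP t m := by
      intro m hm
      rw [hqdef]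
      rw [Sfun_telescope K (sP t) hm, hsP0, sub_zero]
    rw [htel K (le_refl K)]
    congr 1
    refine Finset.sum_congr rfl fun k _ => ?_
    rw [htel (k : ℕ) k.isLt.le]
    congr 1
    have hq' : q t k = sP t ((k : ℕ) + 1) - sP t (k : ℕ) := by rw [hqdef]
    rw [hq']
    have hb : 0 < sP t (k : ℕ) * g k + η := hpos t ht0 _ k
    have ha : 0 < sP t ((k : ℕ) + 1) * g k + η := hpos t ht0 _ k
    have : (1 : ℝ) + (sP t ((k : ℕ) + 1) - sP t (k : ℕ)) * g k / (sP t (k : ℕ) * g k + η)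
        = (sP t ((k : ℕ) + 1) * g k + η) / (sP t (k : ℕ) * g k + η) := by
      field_simp
      ring
    rw [this, Real.log_div (ne_of_gt ha) (ne_of_gt hb)]
  -- local maximality
  have hmem : Set.Ioo (s (i-1)) hi' ∈ nhds v := Ioo_mem_nhds hlo hvhi
  have hvmem : v ∈ Set.Ioo (s (i-1)) hi' := ⟨hlo, hvhi⟩
  have hfv : hfun v = Fobj K g Q η Z pstar := by
    rw [← hFq v hlo hvhi, hqv]
  have hmax : IsLocalMax hfun v := by
    filter_upwards [hmem] with t ht
    rw [← hFq t ht.1 ht.2, hfv]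
    exact hopt (q t) (hqfeas t ht.1 ht.2)
  -- derivative of hfun at v
  set χ : ℕ → ℝ := fun m => if i ≤ m ∧ m ≤ j then 1 else 0 with hχdef
  have hder_sP : ∀ m, HasDerivAt (fun t => sP t m) (χ m) v := by
    intro m
    rw [hsPdef, hχdef]
    dsimp only
    split_ifs with h
    · exact hasDerivAt_id v
    · exact hasDerivAt_const v (s m)
  have hder_log : ∀ m (k : Fin K),
      HasDerivAt (fun t => Real.log (sP t m * g k + η))
        (χ m * g k / (s m * g k + η)) v := by
    intro m k
    have h1 := ((hder_sP m).mul_const (g k)).add_const η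
    have h2 := h1.log (ne_of_gt (hpos v hv0'.le m k))
    rw [hsPv m] at h2
    exact h2
  set D : ℝ := (∑ k : Fin K, Q k * (χ ((k : ℕ) + 1) * g k / (s ((k : ℕ) + 1) * g k + η)
      - χ (k : ℕ) * g k / (s (k : ℕ) * g k + η))) - Z * χ K with hDdef
  have hderiv : HasDerivAt hfun D v := by
    rw [hfdef, hDdef]
    refine HasDerivAt.sub (HasDerivAt.fun_sum fun (k : Fin K) _ => ?_) ((hder_sP K).const_mul Z)
    exact ((hder_log ((k : ℕ) + 1) k).sub (hder_log (k : ℕ) k)).const_mul (Q k)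
  have hD0 : D = 0 := hmax.hasDerivAt_eq_zero hderiv
  -- simplify the sum in D
  set a : Fin K := ⟨i - 1, hiK⟩ with hadef
  have hpoint : ∀ k : Fin K,
      Q k * (χ ((k : ℕ) + 1) * g k / (s ((k : ℕ) + 1) * g k + η)
        - χ (k : ℕ) * g k / (s (k : ℕ) * g k + η))
      = (if (k : ℕ) = i - 1 then Q k * g k / (v * g k + η) else 0)
        - (if (k : ℕ) = j then Q k * g k / (v * g k + η) else 0) := by
    intro k
    rw [hχdef]; dsimp only
    by_cases h1 : (k : ℕ) = i - 1
    · have hne : (k : ℕ) ≠ j := by omega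
      have hc1 : i ≤ (k : ℕ) + 1 ∧ (k : ℕ) + 1 ≤ j := by omega
      have hc0 : ¬ (i ≤ (k : ℕ) ∧ (k : ℕ) ≤ j) := by omega
      rw [if_pos hc1, if_neg hc0, if_pos h1, if_neg hne, hblock _ hc1.1 hc1.2]
      ring
    · by_cases h2 : (k : ℕ) = j
      · have hc1 : ¬ (i ≤ (k : ℕ) + 1 ∧ (k : ℕ) + 1 ≤ j) := by omega
        have hc0 : i ≤ (k : ℕ) ∧ (k : ℕ) ≤ j := by omega
        rw [if_pos hc0, if_neg hc1, if_neg h1, if_pos h2, hblock _ hc0.1 hc0.2]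
        ring
      · by_cases h3 : i ≤ (k : ℕ) ∧ (k : ℕ) ≤ j
        · have hc1 : i ≤ (k : ℕ) + 1 ∧ (k : ℕ) + 1 ≤ j := by omega
          rw [if_pos hc1, if_pos h3, if_neg h1, if_neg h2,
            hblock _ hc1.1 hc1.2, hblock _ h3.1 h3.2]
          ring
        · have hc1 : ¬ (i ≤ (k : ℕ) + 1 ∧ (k : ℕ) + 1 ≤ j) := by omega
          rw [if_neg hc1, if_neg h3, if_neg h1, if_neg h2]
          ring
  have hsum1 : (∑ k : Fin K, if (k : ℕ) = i - 1 then Q k * g k / (v * g k + η) else 0)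
      = Q a * g a / (v * g a + η) := by
    rw [Fintype.sum_eq_single a (fun b hb => if_neg (fun hc => hb (Fin.ext (by
      rw [hc, hadef]))))]
    rw [if_pos (by rw [hadef])]
  have hsumD : (∑ k : Fin K, Q k * (χ ((k : ℕ) + 1) * g k / (s ((k : ℕ) + 1) * g k + η)
      - χ (k : ℕ) * g k / (s (k : ℕ) * g k + η)))
      = Q a * g a / (v * g a + η)
        - (∑ k : Fin K, if (k : ℕ) = j then Q k * g k / (v * g k + η) else 0) := by
    rw [Finset.sum_congr rfl (fun k _ => hpoint k), Finset.sum_sub_distrib, hsum1]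
  -- case split on whether the run reaches K
  by_cases hjK' : j < K
  · set b : Fin K := ⟨j, hjK'⟩ with hbdef
    have hsum2 : (∑ k : Fin K, if (k : ℕ) = j then Q k * g k / (v * g k + η) else 0)
        = Q b * g b / (v * g b + η) := by
      rw [Fintype.sum_eq_single b (fun c hc => if_neg (fun hcc => hc (Fin.ext (by
        rw [hcc, hbdef]))))]
      rw [if_pos (by rw [hbdef])]
    have hχK : χ K = 0 := by
      rw [hχdef]; dsimp only; rw [if_neg (by omega)]
    have hE : Q a * g a / (v * g a + η) = Q b * g b / (v * g b + η) := by
      rw [hDdef, hsumD, hsum2, hχK] at hD0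
      linarith
    have hab : a < b := by
      rw [hadef, hbdef, Fin.lt_def]
      dsimp only
      omega
    refine Or.inl (Or.inr ⟨a, b, hab, ?_⟩)
    have hda : (0:ℝ) < v * g a + η := by
      have := mul_pos hv0' (hgpos a); linarith
    have hdb : (0:ℝ) < v * g b + η := by
      have := mul_pos hv0' (hgpos b); linarith
    have hE' : Q a * g a * (v * g b + η) = Q b * g b * (v * g a + η) := by
      rw [div_eq_div_iff (ne_of_gt hda) (ne_of_gt hdb)] at hE
      linarith
    have hQne : Q a - Q b ≠ 0 := sub_ne_zero_of_ne (hQdist a b (ne_of_lt hab))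
    have hden : g a * g b * (Q a - Q b) ≠ 0 := by
      exact mul_ne_zero (mul_ne_zero (ne_of_gt (hgpos a)) (ne_of_gt (hgpos b))) hQne
    rw [eq_div_iff hden]
    linear_combination hE'
  · have hjK2 : j = K := by omega
    have hsum2 : (∑ k : Fin K, if (k : ℕ) = j then Q k * g k / (v * g k + η) else 0) = 0 := by
      refine Finset.sum_eq_zero fun k _ => if_neg ?_
      have := k.isLt
      omega
    have hχK : χ K = 1 := by
      rw [hχdef]; dsimp only; rw [if_pos (by omega)]
    have hE : Q a * g a / (v * g a + η) = Z := by
      rw [hDdef, hsumD, hsum2, hχK] at hD0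
      linarith
    refine Or.inr ⟨a, ?_⟩
    have hda : (0:ℝ) < v * g a + η := by
      have := mul_pos hv0' (hgpos a); linarith
    have hE' : Q a * g a = Z * (v * g a + η) := by
      rw [div_eq_iff (ne_of_gt hda)] at hE
      linarith
    have hga : g a ≠ 0 := ne_of_gt (hgpos a)
    have hZ' : Z ≠ 0 := ne_of_gt hZ
    have hgoal : Q a / Z - η / g a = (Q a * g a - η * Z) / (Z * g a) := by
      field_simp
    rw [hgoal, eq_div_iff (mul_ne_zero hZ' hga)]
    linear_combination -hE'
end

section
/- Total power identity under slackness: If p* ∈ D is a global maximizer of F over D with S_K(p*) < P_max, and m ∈ {1, …, K} is an index with p*_m > 0 and p*_j = 0 for all j > m, then the total allocated power satisfies S_K(p*) = Q_m/Z − η/g_m. -/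
open Finset

lemma Sfun_nonneg (K : ℕ) (p : Fin K → ℝ) (hp : ∀ k, 0 ≤ p k) (k : ℕ) :
    0 ≤ Sfun K p k := by
  refine Finset.sum_nonneg fun j _ => ?_
  split_ifs <;> simp [hp j]

lemma Sfun_update (K : ℕ) (p : Fin K → ℝ) (m : Fin K) (t : ℝ) (k : ℕ) :
    Sfun K (Function.update p m (p m + t)) k
      = Sfun K p k + (if (m : ℕ) < k then t else 0) := by
  unfold Sfun
  have : ∀ j : Fin K,
      (if (j : ℕ) < k then Function.update p m (p m + t) j else 0)
        = (if (j : ℕ) < k then p j else 0)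
          + (if j = m then (if (m : ℕ) < k then t else 0) else 0) := by
    intro j
    by_cases hj : j = m
    · subst hj; simp [Function.update_self]
      split_ifs <;> ring
    · simp [Function.update_of_ne hj, hj]
  rw [Finset.sum_congr rfl fun j _ => this j, Finset.sum_add_distrib,
    Finset.sum_ite_eq' Finset.univ m (fun _ => if (m : ℕ) < k then t else 0)]
  simp

/-- **Total power identity under slackness.** If `p*` is a global maximizer of `F` over `D`
with `S_K(p*) < P_max`, and `m` is the last index with `p*_m > 0` (i.e., `p*_j = 0` for all
`j > m`), then `S_K(p*) = Q_m/Z − η/g_m`. -/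
theorem total_power_identity
    (K : ℕ) (hK : 1 ≤ K) (g Q : Fin K → ℝ) (η Z Pmax : ℝ)
    (hg : ∀ i j : Fin K, i ≤ j → g j ≤ g i) (hgpos : ∀ i, 0 < g i)
    (hQpos : ∀ i, 0 < Q i) (hη : 0 < η) (hZ : 0 < Z) (hP : 0 < Pmax)
    (pstar : Fin K → ℝ) (hfeas : pstar ∈ Dfeas K Pmax)
    (hopt : ∀ q ∈ Dfeas K Pmax, Fobj K g Q η Z q ≤ Fobj K g Q η Z pstar)
    (hslack : Sfun K pstar K < Pmax)
    (m : Fin K) (hm : 0 < pstar m) (hzero : ∀ j : Fin K, m < j → pstar j = 0) :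
    Sfun K pstar K = Q m / Z - η / g m := by
  obtain ⟨hpos, hsum⟩ := hfeas
  set S : ℝ := Sfun K pstar K with hSdef
  set c : ℝ := Sfun K pstar (m : ℕ) with hcdef
  have hS0 : 0 ≤ S := Sfun_nonneg K pstar hpos K
  have hc0 : 0 ≤ c := Sfun_nonneg K pstar hpos (m : ℕ)
  -- S = c + pstar m
  have hc : S = c + pstar m := by
    have key : ∀ j : Fin K, (if (j : ℕ) < K then pstar j else 0)
        = (if (j : ℕ) < (m : ℕ) then pstar j else 0)
          + (if j = m then pstar m else 0) := by
      intro j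
      rcases lt_trichotomy (j : ℕ) (m : ℕ) with h | h | h
      · have hjm : j ≠ m := fun e => by simp [e] at h
        simp [j.isLt, h, hjm]
      · have hjm : j = m := Fin.ext h
        subst hjm
        simp [j.isLt, lt_irrefl]
      · have hjm : j ≠ m := fun e => by simp [e] at h
        have : pstar j = 0 := hzero j (by exact (Fin.lt_def).mpr h)
        simp [j.isLt, hjm, this, not_lt.mpr (le_of_lt h)]
    rw [hSdef, hcdef]
    unfold Sfun
    rw [Finset.sum_congr rfl fun j _ => key j, Finset.sum_add_distrib,
      Finset.sum_ite_eq' Finset.univ m (fun _ => pstar m)]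
    simp
  have hgm : 0 < g m := hgpos m
  have hden : 0 < c * g m + η := by positivity
  have hSg : 0 < S * g m + η := by positivity
  -- the one-dimensional objective
  set ψ : ℝ → ℝ := fun t => Q m * Real.log ((S + t) * g m + η) - Z * t with hψdef
  set ε : ℝ := min (pstar m) (Pmax - S) with hεdef
  have hε : 0 < ε := lt_min hm (by linarith)
  -- key perturbation inequality
  have key : ∀ t : ℝ, |t| < ε → ψ t ≤ ψ 0 := by
    intro t ht
    have ht1 : -pstar m < t := by
      have := abs_lt.mp ht
      have : -ε < t := this.1
      have hεm : ε ≤ pstar m := min_le_left _ _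
      linarith
    have ht2 : t < Pmax - S := by
      have := abs_lt.mp ht
      have hεm : ε ≤ Pmax - S := min_le_right _ _
      linarith
    set q : Fin K → ℝ := Function.update pstar m (pstar m + t) with hqdef
    have hqK : Sfun K q K = S + t := by
      rw [hqdef, Sfun_update, if_pos m.isLt, hSdef]
    have hqfeas : q ∈ Dfeas K Pmax := by
      constructor
      · intro k
        by_cases hk : k = m
        · subst hk; rw [hqdef, Function.update_self]; linarith
        · rw [hqdef, Function.update_of_ne hk]; exact hpos k
      · rw [hqK]; linarith
    have hStg : 0 < (S + t) * g m + η := by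
      have : 0 ≤ S + t := by rw [hc]; linarith
      positivity
    -- Fobj q = Fobj pstar + (ψ t - ψ 0)
    have hterm : ∀ k : Fin K,
        Q k * Real.log (1 + q k * g k / (Sfun K q (k : ℕ) * g k + η))
          = Q k * Real.log (1 + pstar k * g k / (Sfun K pstar (k : ℕ) * g k + η))
            + (if k = m then
                Q m * Real.log ((S + t) * g m + η) - Q m * Real.log (S * g m + η)
              else 0) := by
      intro k
      rcases lt_trichotomy (k : ℕ) (m : ℕ) with h | h | h
      · have hkm : k ≠ m := fun e => by simp [e] at h
        rw [hqdef, Sfun_update, Function.update_of_ne hkm,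
          if_neg (by omega : ¬ (m : ℕ) < (k : ℕ))]
        simp [hkm]
      · have hkm : k = m := Fin.ext h
        subst hkm
        rw [hqdef, Sfun_update, Function.update_self,
          if_neg (lt_irrefl _), if_pos rfl]
        have e1 : 1 + (pstar k + t) * g k / (c * g k + η)
            = ((S + t) * g k + η) / (c * g k + η) := by
          rw [hc]; field_simp; ring
        have e2 : 1 + pstar k * g k / (c * g k + η)
            = (S * g k + η) / (c * g k + η) := by
          rw [hc]; field_simp; ring
        rw [add_zero, ← hcdef, e1, e2, Real.log_div hStg.ne' hden.ne',
          Real.log_div hSg.ne' hden.ne']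
        ring
      · have hkm : k ≠ m := fun e => by simp [e] at h
        have hpk : pstar k = 0 := hzero k ((Fin.lt_def).mpr h)
        rw [hqdef, Function.update_of_ne hkm]
        simp [hpk, hkm]
    have hFq : Fobj K g Q η Z q = Fobj K g Q η Z pstar + (ψ t - ψ 0) := by
      unfold Fobj
      rw [Finset.sum_congr rfl fun k _ => hterm k, Finset.sum_add_distrib,
        Finset.sum_ite_eq' Finset.univ m
          (fun _ => Q m * Real.log ((S + t) * g m + η) - Q m * Real.log (S * g m + η)),
        hqK, hψdef]
      simp only [Finset.mem_univ, if_pos, ← hSdef]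
      ring_nf
      simp only [add_comm η]
      ring
    have := hopt q hqfeas
    linarith [hFq ▸ this]
  -- ψ has a local max at 0
  have hloc : IsLocalMax ψ 0 := by
    rw [IsLocalMax, IsMaxFilter]
    rw [Metric.eventually_nhds_iff]
    exact ⟨ε, hε, fun {t} ht => key t (by simpa [Real.dist_eq] using ht)⟩
  -- derivative of ψ at 0
  have h1 : HasDerivAt (fun t : ℝ => (S + t) * g m + η) (g m) 0 := by
    simpa using (((hasDerivAt_id (0 : ℝ)).const_add S).mul_const (g m)).add_const η
  have h2 : HasDerivAt (fun t : ℝ => Real.log ((S + t) * g m + η))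
      (g m / (S * g m + η)) 0 := by
    have := h1.log (by simpa using hSg.ne')
    simpa using this
  have hd : HasDerivAt ψ (Q m * (g m / (S * g m + η)) - Z) 0 := by
    have h3 := (h2.const_mul (Q m)).sub ((hasDerivAt_id (0 : ℝ)).const_mul Z)
    simp only [mul_one] at h3
    exact h3
  have h0 : Q m * (g m / (S * g m + η)) - Z = 0 := hloc.hasDerivAt_eq_zero hd
  have h0' : Q m * g m = Z * (S * g m + η) := by
    field_simp at h0
    linarith
  field_simp
  nlinarith [h0', hgm, hZ]
end
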